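/- Let D ⊆ 2^E be a feasible domain and X, Y ∈ D with exchange map (S, T): S : 2^{Y\X} → 2^{Y\X}, T : 2^{Y\X} → 2^{X\Y} (possibly random) satisfying S(R) ⊆ R and X ∪ S(R) \ T(R) ∈ D for all R. Suppose the exchange map is (α,β)-uniform, i.e., P(y ∈ S(R)) ≥ α for all y ∈ Y\X and P(x ∈ T(R)) ≤ β for all x ∈ X\Y, where R ⊆ Y\X is random. Then for any normalized monotone submodular f : 2^E → ℝ_{≥0}, E[f(X ∪ S(R) \ T(R)) − f(X)] ≥ α·f(X ∪ Y) − (α+β)·f(X). -/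

import Mathlib

/-- Submodular marginal inequality shifted by a fixed set `Z`. -/
lemma gmarg_of {E : Type*} [DecidableEq E] (f : Finset E → ℝ)
    (hsub : ∀ A B : Finset E, f (A ∪ B) + f (A ∩ B) ≤ f A + f B)
    (Z : Finset E) {s P : Finset E} (a : E) (hsP : s ⊆ P) (haP : a ∉ P) :
    f (Z ∪ insert a P) + f (Z ∪ s) ≤ f (Z ∪ insert a s) + f (Z ∪ P) := by
  have h := hsub (Z ∪ insert a s) (Z ∪ P)
  have e1 : (Z ∪ insert a s) ∪ (Z ∪ P) = Z ∪ insert a P := by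
    ext x
    have h1 : x ∈ s → x ∈ P := fun h => hsP h
    simp only [Finset.mem_union, Finset.mem_insert]
    tauto
  have e2 : (Z ∪ insert a s) ∩ (Z ∪ P) = Z ∪ s := by
    ext x
    have h1 : x ∈ s → x ∈ P := fun h => hsP h
    have h2 : x ∈ P → ¬ x = a := fun h hh => haP (hh ▸ h)
    simp only [Finset.mem_union, Finset.mem_insert, Finset.mem_inter]
    tauto
  rw [e1, e2] at h
  linarith

/-- Probabilistic covering lemma (lower bound form). -/
lemma cov1 {E : Type*} [Fintype E] [DecidableEq E] (g : Finset E → ℝ)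
    (hgmono : ∀ A B : Finset E, A ⊆ B → g A ≤ g B)
    (hgmarg : ∀ (s P : Finset E) (a : E), s ⊆ P → a ∉ P →
      g (insert a P) + g s ≤ g (insert a s) + g P)
    (p : Finset E → ℝ) (hp : ∀ r, 0 ≤ p r) (α : ℝ) :
    ∀ (V : Finset E) (S : Finset E → Finset E),
      (∀ r, p r ≠ 0 → S r ⊆ V) →
      (∀ y ∈ V, α ≤ ∑ r : Finset E, if y ∈ S r then p r else 0) →
      α * (g V - g ∅) ≤ ∑ r : Finset E, p r * (g (S r) - g ∅) := by
  intro V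
  induction V using Finset.induction_on with
  | empty =>
      intro S hS hm
      rw [sub_self, mul_zero]
      refine Finset.sum_nonneg fun r _ => mul_nonneg (hp r) ?_
      exact sub_nonneg.mpr (hgmono ∅ _ (Finset.empty_subset _))
  | @insert a V' haV' IH =>
      intro S hS hm
      set S' : Finset E → Finset E := fun r => (S r).erase a with hS'def
      have hS' : ∀ r, p r ≠ 0 → S' r ⊆ V' := by
        intro r hr x hx
        rw [Finset.mem_erase] at hx
        have := hS r hr hx.2
        rw [Finset.mem_insert] at this
        tauto
      have hm' : ∀ y ∈ V', α ≤ ∑ r : Finset E, if y ∈ S' r then p r else 0 := by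
        intro y hy
        have hya : y ≠ a := fun h => haV' (h ▸ hy)
        have := hm y (Finset.mem_insert_of_mem hy)
        convert this using 2 with r
        simp [hS'def, Finset.mem_erase, hya]
      have IH' := IH S' hS' hm'
      set c : ℝ := g (insert a V') - g V' with hc
      have hc0 : 0 ≤ c := sub_nonneg.mpr (hgmono _ _ (Finset.subset_insert a V'))
      have key : ∀ r : Finset E,
          p r * (if a ∈ S r then c else 0) + p r * (g (S' r) - g ∅)
            ≤ p r * (g (S r) - g ∅) := by
        intro r
        by_cases hpr : p r = 0
        · simp [hpr]
        by_cases haS : a ∈ S r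
        · simp only [haS, if_true]
          have h1 : insert a (S' r) = S r := Finset.insert_erase haS
          have h2 := hgmarg (S' r) V' a (hS' r hpr) haV'
          rw [h1] at h2
          have h3 : c + (g (S' r) - g ∅) ≤ g (S r) - g ∅ := by
            rw [hc]; linarith
          have h4 := mul_le_mul_of_nonneg_left h3 (hp r)
          nlinarith [h4]
        · have h1 : S' r = S r := Finset.erase_eq_of_notMem haS
          simp [haS, h1]
      have hsum := Finset.sum_le_sum (fun r (_ : r ∈ Finset.univ) => key r)
      rw [Finset.sum_add_distrib] at hsum
      have e3 : ∑ r : Finset E, p r * (if a ∈ S r then c else 0)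
          = (∑ r : Finset E, if a ∈ S r then p r else 0) * c := by
        rw [Finset.sum_mul]
        refine Finset.sum_congr rfl fun r _ => ?_
        split_ifs <;> ring
      have hma := hm a (Finset.mem_insert_self a V')
      have e4 : α * c ≤ (∑ r : Finset E, if a ∈ S r then p r else 0) * c :=
        mul_le_mul_of_nonneg_right hma hc0
      have : α * (g (insert a V') - g ∅) = α * c + α * (g V' - g ∅) := by
        rw [hc]; ring
      rw [this]
      rw [e3] at hsum
      linarith

/-- Probabilistic removal lemma (upper bound form). -/
lemma cov2 {E : Type*} [Fintype E] [DecidableEq E] (f : Finset E → ℝ)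
    (hnn : ∀ Z : Finset E, 0 ≤ f Z)
    (hmono : ∀ A B : Finset E, A ⊆ B → f A ≤ f B)
    (hsub : ∀ A B : Finset E, f (A ∪ B) + f (A ∩ B) ≤ f A + f B)
    (X Y : Finset E)
    (p : Finset E → ℝ) (hp : ∀ r, 0 ≤ p r) (hp1 : ∑ r : Finset E, p r = 1)
    (β : ℝ) (hβ : 0 ≤ β)
    (T : Finset E → Finset E) (hT : ∀ r, T r ⊆ X \ Y)
    (hm : ∀ x ∈ X \ Y, ∑ r : Finset E, (if x ∈ T r then p r else 0) ≤ β) :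
    ∑ r : Finset E, p r * (f X - f (X \ T r)) ≤ β * f X := by
  set g : Finset E → ℝ := fun A => f ((X ∩ Y) ∪ A) with hg
  have hgmono : ∀ A B : Finset E, A ⊆ B → g A ≤ g B := fun A B h =>
    hmono _ _ (Finset.union_subset_union_right h)
  have hgmarg : ∀ (s P : Finset E) (a : E), s ⊆ P → a ∉ P →
      g (insert a P) + g s ≤ g (insert a s) + g P := fun s P a hsP haP =>
    gmarg_of f hsub (X ∩ Y) a hsP haP
  have hmarg : ∀ x ∈ X \ Y, (1 - β) ≤
      ∑ r : Finset E, if x ∈ (X \ Y) \ T r then p r else 0 := by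
    intro x hx
    have e : ∀ r : Finset E, (if x ∈ (X \ Y) \ T r then p r else 0)
        = p r - (if x ∈ T r then p r else 0) := by
      intro r
      have : x ∈ (X \ Y) \ T r ↔ x ∉ T r := by
        rw [Finset.mem_sdiff]; exact ⟨fun h => h.2, fun h => ⟨hx, h⟩⟩
      rw [if_congr this rfl rfl]
      split_ifs <;> simp_all
    rw [Finset.sum_congr rfl (fun r _ => e r), Finset.sum_sub_distrib, hp1]
    have := hm x hx
    linarith
  have hcov := cov1 g hgmono hgmarg p hp (1 - β) (X \ Y)
    (fun r => (X \ Y) \ T r) (fun r _ => Finset.sdiff_subset) hmarg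
  have eW : (X ∩ Y) ∪ (X \ Y) = X := by ext x; simp only [Finset.mem_union, Finset.mem_inter, Finset.mem_sdiff]; tauto
  have eE : (X ∩ Y) ∪ (∅ : Finset E) = X ∩ Y := Finset.union_empty _
  have eT : ∀ r : Finset E, (X ∩ Y) ∪ ((X \ Y) \ T r) = X \ T r := by
    intro r
    ext x
    have h1 : x ∈ T r → x ∈ X ∧ x ∉ Y := fun h => Finset.mem_sdiff.mp (hT r h)
    simp only [Finset.mem_union, Finset.mem_inter, Finset.mem_sdiff]
    tauto
  simp only [hg, eW, eE] at hcov
  have hcov' : (1 - β) * (f X - f (X ∩ Y)) ≤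
      ∑ r : Finset E, p r * (f (X \ T r) - f (X ∩ Y)) := by
    refine hcov.trans_eq (Finset.sum_congr rfl fun r _ => ?_)
    rw [eT r]
  have e5 : ∑ r : Finset E, p r * (f X - f (X \ T r))
      = (f X - f (X ∩ Y)) - ∑ r : Finset E, p r * (f (X \ T r) - f (X ∩ Y)) := by
    have : ∀ r : Finset E, p r * (f X - f (X \ T r))
        = p r * (f X - f (X ∩ Y)) - p r * (f (X \ T r) - f (X ∩ Y)) := fun r => by ring
    rw [Finset.sum_congr rfl (fun r _ => this r), Finset.sum_sub_distrib,
      ← Finset.sum_mul, hp1, one_mul]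
  rw [e5]
  nlinarith [hnn (X ∩ Y), mul_nonneg hβ (hnn (X ∩ Y))]

theorem exchange_expectation_submodular {E : Type*} [Fintype E] [DecidableEq E]
    (D : Set (Finset E)) (X Y : Finset E) (hX : X ∈ D) (hY : Y ∈ D)
    (f : Finset E → ℝ)
    (hnn : ∀ Z : Finset E, 0 ≤ f Z)
    (hnorm : f ∅ = 0)
    (hmono : ∀ A B : Finset E, A ⊆ B → f A ≤ f B)
    (hsub : ∀ A B : Finset E, f (A ∪ B) + f (A ∩ B) ≤ f A + f B)
    (α β : ℝ) (hα : 0 ≤ α) (hβ : 0 ≤ β)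
    (μ : PMF (Finset E)) (hsupp : ∀ r : Finset E, μ r ≠ 0 → r ⊆ Y \ X)
    (S T : Finset E → Finset E)
    (hSR : ∀ r, S r ⊆ r) (hTX : ∀ r, T r ⊆ X \ Y)
    (hfeas : ∀ r ⊆ Y \ X, (X ∪ S r) \ T r ∈ D)
    (hmargS : ∀ y ∈ Y \ X, α ≤ ∑ r : Finset E, (if y ∈ S r then (μ r).toReal else 0))
    (hmargT : ∀ x ∈ X \ Y, ∑ r : Finset E, (if x ∈ T r then (μ r).toReal else 0) ≤ β) :
    α * f (X ∪ Y) - (α + β) * f X ≤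
      ∑ r : Finset E, (μ r).toReal * (f ((X ∪ S r) \ T r) - f X) := by
  set p : Finset E → ℝ := fun r => (μ r).toReal with hpdef
  have hp : ∀ r, 0 ≤ p r := fun r => ENNReal.toReal_nonneg
  have hp1 : ∑ r : Finset E, p r = 1 := by
    have h1 : ∑ r : Finset E, μ r = 1 := by
      rw [← tsum_fintype (L := .unconditional _)]; exact μ.tsum_coe
    have h2 : ∑ r : Finset E, (μ r).toReal = (∑ r : Finset E, μ r).toReal :=
      (ENNReal.toReal_sum fun r _ => μ.apply_ne_top r).symm
    rw [hpdef]
    simp only [h2, h1, ENNReal.toReal_one]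
  have hsupp' : ∀ r : Finset E, p r ≠ 0 → r ⊆ Y \ X := by
    intro r hr
    refine hsupp r fun h => hr ?_
    simp [hpdef, h]
  -- Step 1: covering lemma for S with g A = f (X ∪ A)
  have hgmono : ∀ A B : Finset E, A ⊆ B → f (X ∪ A) ≤ f (X ∪ B) := fun A B h =>
    hmono _ _ (Finset.union_subset_union_right h)
  have hgmarg : ∀ (s P : Finset E) (a : E), s ⊆ P → a ∉ P →
      f (X ∪ insert a P) + f (X ∪ s) ≤ f (X ∪ insert a s) + f (X ∪ P) :=
    fun s P a hsP haP => gmarg_of f hsub X a hsP haP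
  have hcovS := cov1 (fun A => f (X ∪ A)) hgmono hgmarg p hp α (Y \ X) S
    (fun r hr => (hSR r).trans (hsupp' r hr)) hmargS
  simp only [Finset.union_sdiff_self_eq_union, Finset.union_empty] at hcovS
  -- Step 2: removal lemma for T
  have hcovT := cov2 f hnn hmono hsub X Y p hp hp1 β hβ T hTX hmargT
  -- Step 3: per-realization submodular decomposition
  have key : ∀ r : Finset E,
      p r * (f (X ∪ S r) - f X) + p r * (f (X \ T r) - f X)
        ≤ p r * (f ((X ∪ S r) \ T r) - f X) := by
    intro r
    by_cases hpr : p r = 0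
    · simp [hpr]
    have hS1 : S r ⊆ Y \ X := (hSR r).trans (hsupp' r hpr)
    have h := hsub ((X ∪ S r) \ T r) X
    have e1 : ((X ∪ S r) \ T r) ∪ X = X ∪ S r := by
      ext x
      have hTx : x ∈ T r → x ∈ X ∧ x ∉ Y := fun h => Finset.mem_sdiff.mp (hTX r h)
      have hSx : x ∈ S r → x ∈ Y ∧ x ∉ X := fun h => Finset.mem_sdiff.mp (hS1 h)
      simp only [Finset.mem_union, Finset.mem_sdiff]
      tauto
    have e2 : ((X ∪ S r) \ T r) ∩ X = X \ T r := by
      ext x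
      simp only [Finset.mem_union, Finset.mem_sdiff, Finset.mem_inter]
      tauto
    rw [e1, e2] at h
    have h3 : (f (X ∪ S r) - f X) + (f (X \ T r) - f X)
        ≤ f ((X ∪ S r) \ T r) - f X := by linarith
    have h4 := mul_le_mul_of_nonneg_left h3 (hp r)
    nlinarith [h4]
  have hsum := Finset.sum_le_sum (fun r (_ : r ∈ Finset.univ) => key r)
  rw [Finset.sum_add_distrib] at hsum
  have e6 : ∑ r : Finset E, p r * (f (X \ T r) - f X)
      = - ∑ r : Finset E, p r * (f X - f (X \ T r)) := by
    rw [← Finset.sum_neg_distrib]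
    exact Finset.sum_congr rfl fun r _ => by ring
  rw [e6] at hsum
  have : α * f (X ∪ Y) - (α + β) * f X
      = α * (f (X ∪ Y) - f X) + (- (β * f X)) := by ring
  rw [this]
  calc α * (f (X ∪ Y) - f X) + (- (β * f X))
      ≤ (∑ r : Finset E, p r * (f (X ∪ S r) - f X))
        + (- ∑ r : Finset E, p r * (f X - f (X \ T r))) := by
        have := neg_le_neg hcovT
        linarith
    _ ≤ ∑ r : Finset E, p r * (f ((X ∪ S r) \ T r) - f X) := hsum
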